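/- Let M = (M_{ji}) be an m×n integer matrix and let χ : (ℂˣ)ⁿ → (ℂˣ)ᵐ be the monomial group homomorphism defined by χ(t)_j = ∏_{i=1}^n t_i^{M_{ji}} (integer powers). If (x_a)_{a∈ℕ} is a sequence in (ℂˣ)ⁿ such that (χ(x_a))_{a∈ℕ} converges to some y ∈ (ℂˣ)ᵐ, then there exists a sequence (x'_a)_{a∈ℕ} in (ℂˣ)ⁿ converging to some x' ∈ (ℂˣ)ⁿ such that χ(x'_a) = χ(x_a) for every a ∈ ℕ; in particular y = χ(x') lies in the image of χ. -/

import Mathlib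

open Filter Topology

/-- Duality over a field: a vector orthogonal to the kernel of the transpose
lies in the range of a matrix. -/
lemma aux_dual {F : Type*} [Field F] {m n : ℕ} (B : Matrix (Fin m) (Fin n) F)
    (z : Fin m → F)
    (hz : ∀ w : Fin m → F, B.transpose.mulVec w = 0 → dotProduct w z = 0) :
    ∃ v : Fin n → F, B.mulVec v = z := by
  by_contra h
  push_neg at h
  have hzV : z ∉ LinearMap.range B.mulVecLin := by
    simpa [Matrix.mulVecLin] using fun v => h v
  -- find a functional vanishing on the range but not on z
  set V := LinearMap.range B.mulVecLin with hV
  have hq : Submodule.Quotient.mk (p := V) z ≠ 0 := by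
    simpa [Submodule.Quotient.mk_eq_zero] using hzV
  have := (Module.forall_dual_apply_eq_zero_iff F (Submodule.Quotient.mk (p := V) z)).not.mpr hq
  push_neg at this
  obtain ⟨ψ, hψ⟩ := this
  set φ : (Fin m → F) →ₗ[F] F := ψ.comp (V.mkQ) with hφ
  have hφz : φ z ≠ 0 := hψ
  have hφV : ∀ u ∈ V, φ u = 0 := by
    intro u hu
    simp [hφ, (Submodule.Quotient.mk_eq_zero V).mpr hu, Submodule.mkQ_apply]
  set w : Fin m → F := fun j => φ (fun j' => if j = j' then 1 else 0) with hw
  have hφeq : ∀ u : Fin m → F, φ u = dotProduct w u := by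
    intro u
    rw [LinearMap.pi_apply_eq_sum_univ φ u]
    simp only [dotProduct, smul_eq_mul]
    exact Finset.sum_congr rfl (fun j _ => mul_comm _ _)
  have hker : B.transpose.mulVec w = 0 := by
    funext i
    have hcol : B.mulVec (fun i' => if i = i' then 1 else 0) ∈ V :=
      ⟨(fun i' => if i = i' then 1 else 0), rfl⟩
    have h0 := hφV _ hcol
    rw [hφeq] at h0
    simp only [Matrix.mulVec, dotProduct, Matrix.transpose_apply, Pi.zero_apply]
    simp only [Matrix.mulVec, dotProduct, Pi.single_apply, mul_ite, mul_one,
      mul_zero, Finset.sum_ite_eq, Finset.sum_ite_eq', Finset.mem_univ, if_true] at h0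
    rw [← h0]
    exact Finset.sum_congr rfl (fun j _ => mul_comm _ _)
  exact hφz (by rw [hφeq]; exact hz w hker)

/-- An integer sequence whose complex cast converges is eventually constant. -/
lemma aux_int_eventually_const (g : ℕ → ℤ) (L : ℂ)
    (h : Tendsto (fun a => (g a : ℂ)) atTop (𝓝 L)) :
    ∃ t : ℤ, ∀ᶠ a in atTop, g a = t := by
  obtain ⟨N, hN⟩ := (Metric.tendsto_atTop.mp h) (1/2) (by norm_num)
  refine ⟨g N, eventually_atTop.mpr ⟨N, fun a ha => ?_⟩⟩
  have h1 := hN a ha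
  have h2 := hN N le_rfl
  have hd : dist ((g a : ℂ)) ((g N : ℂ)) < 1 := by
    calc dist ((g a : ℂ)) ((g N : ℂ)) ≤ dist ((g a : ℂ)) L + dist L ((g N : ℂ)) :=
          dist_triangle _ _ _
    _ < 1/2 + 1/2 := by rw [dist_comm L]; exact add_lt_add h1 h2
    _ = 1 := by norm_num
  rw [Complex.dist_eq] at hd
  have h3 : ‖(((g a - g N : ℤ) : ℝ) : ℂ)‖ < 1 := by push_cast at hd ⊢; exact hd
  rw [Complex.norm_real, Real.norm_eq_abs] at h3
  have h4 : |(g a - g N : ℤ)| < 1 := by exact_mod_cast h3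
  have h5 := abs_lt.mp h4
  omega

/-- Clearing denominators. -/
lemma aux_clear_denoms {m : ℕ} (w : Fin m → ℚ) :
    ∃ (q : ℕ) (w' : Fin m → ℤ), 0 < q ∧ ∀ j, (w' j : ℚ) = (q : ℚ) * w j := by
  classical
  refine ⟨∏ j, (w j).den, fun j => ((∏ j, (w j).den : ℕ) / (w j).den : ℕ) * (w j).num,
    Finset.prod_pos (fun j _ => (w j).pos), fun j => ?_⟩
  have hdvd : (w j).den ∣ ∏ j, (w j).den := Finset.dvd_prod_of_mem _ (Finset.mem_univ j)
  have hden : ((w j).den : ℚ) ≠ 0 := by exact_mod_cast (w j).den_ne_zero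
  have key : ((w j).num : ℚ) = w j * (w j).den := by
    exact (div_eq_iff hden).mp (Rat.num_div_den (w j))
  rw [Int.cast_mul, Int.cast_natCast, Nat.cast_div hdvd hden, key]
  field_simp

/-- Product of unit powers as an exponential of logs. -/
lemma aux_prod_log_exp {n : ℕ} (r : Fin n → ℤ) (t : Fin n → ℂˣ) :
    ((∏ i, (t i) ^ (r i) : ℂˣ) : ℂ)
      = Complex.exp (∑ i, (r i : ℂ) * Complex.log (t i : ℂ)) := by
  rw [Complex.exp_sum]
  simp only [← Units.coeHom_apply, map_prod]
  refine Finset.prod_congr rfl (fun i _ => ?_)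
  simp only [Units.coeHom_apply]
  rw [Units.val_zpow_eq_zpow_val, Complex.exp_int_mul,
    Complex.exp_log (Units.ne_zero (t i))]

/-- Product of powers of exponentials. -/
lemma aux_prod_exp {n : ℕ} (r : Fin n → ℤ) (l : Fin n → ℂ) :
    ((∏ i, (Units.mk0 (Complex.exp (l i)) (Complex.exp_ne_zero _)) ^ (r i) : ℂˣ) : ℂ)
      = Complex.exp (∑ i, (r i : ℂ) * l i) := by
  rw [Complex.exp_sum]
  simp only [← Units.coeHom_apply, map_prod]
  refine Finset.prod_congr rfl (fun i _ => ?_)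
  simp only [Units.coeHom_apply]
  rw [Units.val_zpow_eq_zpow_val, Complex.exp_int_mul, Units.val_mk0]

/-- Multiplicative adjustment lemma: a sequence in `(ℂˣ)ⁿ` whose image under a
monomial homomorphism converges in `(ℂˣ)ᵐ` can be replaced by a convergent sequence
with the same monomial images; in particular the limit lies in the image. -/
theorem monomial_adjust (n m : ℕ) (M : Matrix (Fin m) (Fin n) ℤ)
    (χ : (Fin n → ℂˣ) → (Fin m → ℂˣ))
    (hχ : ∀ (t : Fin n → ℂˣ) (j : Fin m), χ t j = ∏ i, (t i) ^ (M j i))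
    (x : ℕ → (Fin n → ℂˣ)) (y : Fin m → ℂˣ)
    (hconv : Tendsto (fun a => fun j => ((χ (x a) j : ℂ))) atTop
      (𝓝 (fun j => (y j : ℂ)))) :
    ∃ x' : ℕ → (Fin n → ℂˣ), ∃ xlim : Fin n → ℂˣ,
      Tendsto (fun a => fun i => ((x' a i : ℂ))) atTop (𝓝 (fun i => (xlim i : ℂ))) ∧
      (∀ a : ℕ, χ (x' a) = χ (x a)) ∧ y = χ xlim := by
  classical
  set twoPiI : ℂ := 2 * Real.pi * Complex.I with htwoPiI
  set Mc : Matrix (Fin m) (Fin n) ℂ := M.map (fun z => (z : ℂ)) with hMc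
  set A : (Fin n → ℂ) →ₗ[ℂ] (Fin m → ℂ) := Mc.mulVecLin with hA
  set L : ℕ → Fin n → ℂ := fun a i => Complex.log ((x a i : ℂ)) with hLdef
  have hAapp : ∀ (u : Fin n → ℂ) (j : Fin m), A u j = ∑ i, (M j i : ℂ) * u i := by
    intro u j
    simp [hA, hMc, Matrix.mulVecLin, Matrix.mulVec, dotProduct, Matrix.map_apply]
  have hexpA : ∀ a j, Complex.exp (A (L a) j) = (χ (x a) j : ℂ) := by
    intro a j
    rw [hAapp, hχ, aux_prod_log_exp]
  -- componentwise convergence of χ (x a)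
  have hconvj : ∀ j, Tendsto (fun a => ((χ (x a) j : ℂ))) atTop (𝓝 ((y j : ℂ))) := by
    intro j
    exact (tendsto_pi_nhds.mp hconv) j
  set c : ℕ → Fin m → ℂ :=
    fun a j => Complex.log ((y j : ℂ)) + Complex.log ((χ (x a) j : ℂ) / (y j : ℂ)) with hcdef
  set climit : Fin m → ℂ := fun j => Complex.log ((y j : ℂ)) with hclim
  have hcconv : ∀ j, Tendsto (fun a => c a j) atTop (𝓝 (climit j)) := by
    intro j
    have h1 : Tendsto (fun a => (χ (x a) j : ℂ) / (y j : ℂ)) atTop (𝓝 1) := by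
      have := (hconvj j).div_const ((y j : ℂ))
      rwa [div_self (Units.ne_zero (y j))] at this
    have h2 : Tendsto (fun a => Complex.log ((χ (x a) j : ℂ) / (y j : ℂ))) atTop (𝓝 0) := by
      have hcont : ContinuousAt Complex.log 1 :=
        continuousAt_clog Complex.one_mem_slitPlane
      have := hcont.tendsto.comp h1
      rwa [Complex.log_one] at this
    simpa using tendsto_const_nhds.add h2
  have hexpc : ∀ a j, Complex.exp (c a j) = (χ (x a) j : ℂ) := by
    intro a j
    rw [hcdef]
    rw [Complex.exp_add, Complex.exp_log (Units.ne_zero (y j)),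
      Complex.exp_log (div_ne_zero (Units.ne_zero _) (Units.ne_zero (y j)))]
    field_simp
  -- integer corrections
  have hk : ∀ a j, ∃ kk : ℤ, A (L a) j = c a j + kk * twoPiI := by
    intro a j
    have : Complex.exp (A (L a) j) = Complex.exp (c a j) := by rw [hexpA, hexpc]
    exact Complex.exp_eq_exp_iff_exists_int.mp this
  choose k hkspec using hk
  -- the integer kernel of the transpose
  set T : (Fin m → ℤ) →ₗ[ℤ] (Fin n → ℤ) := (M.transpose).mulVecLin with hT
  obtain ⟨S, hS⟩ : (LinearMap.ker T).FG := IsNoetherian.noetherian _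
  have hTapp : ∀ (w : Fin m → ℤ) (i : Fin n), T w i = ∑ j, M j i * w j := by
    intro w i
    simp [hT, Matrix.mulVecLin, Matrix.mulVec, dotProduct, Matrix.transpose_apply]
    simp only [Matrix.vecMul, dotProduct]
    exact Finset.sum_congr rfl (fun j _ => mul_comm _ _)
  -- orthogonality of kernel vectors with A (L a)
  have horth : ∀ w : Fin m → ℤ, T w = 0 → ∀ a : ℕ, ∑ j, (w j : ℂ) * A (L a) j = 0 := by
    intro w hw a
    have h1 : ∀ j, (w j : ℂ) * A (L a) j = ∑ i, (w j : ℂ) * ((M j i : ℂ) * L a i) := by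
      intro j
      rw [hAapp, Finset.mul_sum]
    calc ∑ j, (w j : ℂ) * A (L a) j
        = ∑ j, ∑ i, (w j : ℂ) * ((M j i : ℂ) * L a i) := Finset.sum_congr rfl (fun j _ => h1 j)
      _ = ∑ i, ∑ j, (w j : ℂ) * ((M j i : ℂ) * L a i) := Finset.sum_comm
      _ = ∑ i, (∑ j, (M j i : ℂ) * (w j : ℂ)) * L a i := by
            refine Finset.sum_congr rfl (fun i _ => ?_)
            rw [Finset.sum_mul]
            refine Finset.sum_congr rfl (fun j _ => by ring)
      _ = 0 := by
            refine Finset.sum_eq_zero (fun i _ => ?_)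
            have : ((T w i : ℤ) : ℂ) = 0 := by rw [hw]; simp
            rw [hTapp] at this
            push_cast at this
            rw [this, zero_mul]
  -- eventual constancy of the dot products with kernel generators
  have hev : ∀ w : Fin m → ℤ, T w = 0 →
      ∃ t : ℤ, ∀ᶠ a in atTop, dotProduct w (k a) = t := by
    intro w hw
    have hwc : ∀ a, ((dotProduct w (k a) : ℤ) : ℂ)
        = -(∑ j, (w j : ℂ) * c a j) / twoPiI := by
      intro a
      have h2 : ∑ j, (w j : ℂ) * (c a j + (k a j : ℂ) * twoPiI) = 0 := by
        have := horth w hw a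
        rw [← this]
        refine Finset.sum_congr rfl (fun j _ => by rw [hkspec a j])
      have h3 : (∑ j, (w j : ℂ) * c a j) + (∑ j, (w j : ℂ) * (k a j : ℂ)) * twoPiI = 0 := by
        rw [← h2, Finset.sum_mul, ← Finset.sum_add_distrib]
        refine Finset.sum_congr rfl (fun j _ => by ring)
      have hpi : twoPiI ≠ 0 := by
        simp [htwoPiI, Complex.I_ne_zero, Real.pi_ne_zero, Complex.ofReal_ne_zero]
      have h4 : (∑ j, (w j : ℂ) * (k a j : ℂ)) = -(∑ j, (w j : ℂ) * c a j) / twoPiI := by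
        field_simp
        linear_combination h3
      rw [← h4]
      push_cast [dotProduct]
      rfl
    have hlim : Tendsto (fun a => ((dotProduct w (k a) : ℤ) : ℂ)) atTop
        (𝓝 (-(∑ j, (w j : ℂ) * climit j) / twoPiI)) := by
      have hsum : Tendsto (fun a => ∑ j, (w j : ℂ) * c a j) atTop
          (𝓝 (∑ j, (w j : ℂ) * climit j)) := by
        refine tendsto_finset_sum _ (fun j _ => ?_)
        exact (hcconv j).const_mul _
      have := (hsum.neg).div_const twoPiI
      exact Tendsto.congr (fun a => (hwc a).symm) this
    exact aux_int_eventually_const _ _ hlim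
  have hSker : ∀ w ∈ S, T w = 0 := by
    intro w hw
    have : w ∈ LinearMap.ker T := by
      rw [← hS]
      exact Submodule.subset_span hw
    exact LinearMap.mem_ker.mp this
  have hchoice : ∀ w : Fin m → ℤ, ∃ t : ℤ, w ∈ S →
      ∀ᶠ a in atTop, dotProduct w (k a) = t := by
    intro w
    by_cases hw : w ∈ S
    · obtain ⟨t, ht⟩ := hev w (hSker w hw)
      exact ⟨t, fun _ => ht⟩
    · exact ⟨0, fun h => absurd h hw⟩
  choose tt htt using hchoice
  have hall : ∀ᶠ a in atTop, ∀ w ∈ S, dotProduct w (k a) = tt w :=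
    (S.eventually_all).mpr (fun w hw => htt w hw)
  obtain ⟨N, hN⟩ := eventually_atTop.mp hall
  -- full-kernel orthogonality of the difference k N - k a
  have hker0 : ∀ a, N ≤ a → ∀ w ∈ LinearMap.ker T,
      dotProduct w (k N - k a) = 0 := by
    intro a ha w hw
    set φd : (Fin m → ℤ) →ₗ[ℤ] ℤ :=
      { toFun := fun w => dotProduct w (k N - k a)
        map_add' := fun u v => add_dotProduct u v _
        map_smul' := fun r u => smul_dotProduct r u _ } with hφd
    have hle : Submodule.span ℤ (S : Set (Fin m → ℤ)) ≤ LinearMap.ker φd := by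
      refine Submodule.span_le.mpr (fun w hw => ?_)
      have h1 := hN a ha w hw
      have h2 := hN N le_rfl w hw
      simp only [LinearMap.mem_ker, hφd, LinearMap.coe_mk, AddHom.coe_mk, SetLike.mem_coe] at *
      rw [dotProduct_sub, h1, h2, sub_self]
    rw [← hS] at hw
    exact LinearMap.mem_ker.mp (hle hw)
  -- rational duality gives membership in the range of A
  set Mq : Matrix (Fin m) (Fin n) ℚ := M.map (fun z => (z : ℚ)) with hMq
  have hmem : ∀ a, N ≤ a →
      (fun j => c a j + (k N j : ℂ) * twoPiI) ∈ LinearMap.range A := by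
    intro a ha
    have hrat : ∃ v : Fin n → ℚ, Mq.mulVec v = fun j => ((k N j - k a j : ℤ) : ℚ) := by
      apply aux_dual
      intro w hw
      obtain ⟨q, w', hq, hw'⟩ := aux_clear_denoms w
      have hw'ker : T w' = 0 := by
        funext i
        have hcast : ((T w' i : ℤ) : ℚ) = (q : ℚ) * ((Mq.transpose.mulVec w) i) := by
          rw [hTapp]
          push_cast
          simp only [Matrix.mulVec, dotProduct, Matrix.transpose_apply, hMq,
            Matrix.map_apply]
          rw [Finset.mul_sum]
          refine Finset.sum_congr rfl (fun j _ => ?_)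
          rw [hw' j]
          ring
        rw [hw] at hcast
        simp only [Pi.zero_apply, mul_zero] at hcast
        exact_mod_cast hcast
      have h0 := hker0 a ha w' (LinearMap.mem_ker.mpr hw'ker)
      have h0q : ((dotProduct w' (k N - k a) : ℤ) : ℚ) = 0 := by rw [h0]; simp
      have hqz : (q : ℚ) * dotProduct w (fun j => ((k N j - k a j : ℤ) : ℚ)) = 0 := by
        rw [← h0q]
        push_cast [dotProduct]
        rw [Finset.mul_sum]
        refine Finset.sum_congr rfl (fun j _ => ?_)
        rw [hw' j]
        push_cast [Pi.sub_apply]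
        ring
      have hqne : (q : ℚ) ≠ 0 := by exact_mod_cast hq.ne'
      exact (mul_eq_zero.mp hqz).resolve_left hqne
    obtain ⟨v, hv⟩ := hrat
    refine ⟨L a + twoPiI • (fun i => ((v i : ℂ))), ?_⟩
    funext j
    have hexpand : A (L a + twoPiI • (fun i => ((v i : ℂ)))) j
        = A (L a) j + twoPiI * A (fun i => ((v i : ℂ))) j := by
      rw [map_add, map_smul]
      simp [Pi.add_apply, Pi.smul_apply, smul_eq_mul]
    have hAv : A (fun i => ((v i : ℂ))) j = ((k N j : ℤ) : ℂ) - ((k a j : ℤ) : ℂ) := by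
      rw [hAapp]
      have := congrFun hv j
      simp only [Matrix.mulVec, dotProduct, hMq, Matrix.map_apply] at this
      have hc : ((∑ i, (M j i : ℚ) * v i : ℚ) : ℂ) = (((k N j - k a j : ℤ) : ℚ) : ℂ) := by
        exact_mod_cast congrArg (fun r : ℚ => (r : ℂ)) this
      push_cast at hc ⊢
      convert hc using 2
    rw [hexpand, hAv, hkspec a j]
    ring
  set zlim : Fin m → ℂ := fun j => climit j + (k N j : ℂ) * twoPiI with hzlim
  have hzconv : Tendsto (fun a => fun j => c a j + (k N j : ℂ) * twoPiI) atTop (𝓝 zlim) := by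
    refine tendsto_pi_nhds.mpr (fun j => ?_)
    exact (hcconv j).add_const _
  have hzmem : zlim ∈ LinearMap.range A := by
    have hcl : IsClosed ((LinearMap.range A : Submodule ℂ (Fin m → ℂ)) : Set (Fin m → ℂ)) :=
      Submodule.closed_of_finiteDimensional _
    exact hcl.mem_of_tendsto hzconv (eventually_atTop.mpr ⟨N, fun a ha => hmem a ha⟩)
  -- a linear section of A over its range
  obtain ⟨g, hg⟩ := A.rangeRestrict.exists_rightInverse_of_surjective
    (LinearMap.range_rangeRestrict A)
  have hg' : ∀ u : LinearMap.range A, A (g u) = (u : Fin m → ℂ) := by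
    intro u
    have := LinearMap.congr_fun hg u
    exact congrArg Subtype.val this
  set Z : ℕ → LinearMap.range A := fun a =>
    if h : N ≤ a then ⟨fun j => c a j + (k N j : ℂ) * twoPiI, hmem a h⟩
    else ⟨zlim, hzmem⟩ with hZ
  have hZconv : Tendsto Z atTop (𝓝 ⟨zlim, hzmem⟩) := by
    rw [tendsto_subtype_rng]
    refine Tendsto.congr' ?_ hzconv
    filter_upwards [eventually_ge_atTop N] with a ha
    simp [hZ, ha]
  have hgc : Continuous g := g.continuous_of_finiteDimensional
  set L' : ℕ → Fin n → ℂ := fun a => g (Z a) with hL'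
  set Llim : Fin n → ℂ := g ⟨zlim, hzmem⟩ with hLlim
  have hL'conv : Tendsto L' atTop (𝓝 Llim) := (hgc.tendsto _).comp hZconv
  have hAL' : ∀ a, N ≤ a → ∀ j, A (L' a) j = c a j + (k N j : ℂ) * twoPiI := by
    intro a ha j
    have := hg' (Z a)
    rw [hL'] at *
    rw [this]
    simp [hZ, ha]
  have hALlim : ∀ j, A Llim j = zlim j := by
    intro j
    rw [hLlim, hg' ⟨zlim, hzmem⟩]
  -- definition of the adjusted sequence
  refine ⟨fun a => if N ≤ a
      then (fun i => Units.mk0 (Complex.exp (L' a i)) (Complex.exp_ne_zero _))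
      else x a,
    fun i => Units.mk0 (Complex.exp (Llim i)) (Complex.exp_ne_zero _), ?_, ?_, ?_⟩
  · -- convergence
    refine tendsto_pi_nhds.mpr (fun i => ?_)
    have h1 : Tendsto (fun a => L' a i) atTop (𝓝 (Llim i)) := (tendsto_pi_nhds.mp hL'conv) i
    have h2 : Tendsto (fun a => Complex.exp (L' a i)) atTop (𝓝 (Complex.exp (Llim i))) :=
      (Complex.continuous_exp.continuousAt.tendsto).comp h1
    refine Tendsto.congr' ?_ h2
    filter_upwards [eventually_ge_atTop N] with a ha
    simp [ha]
  · -- same monomial images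
    intro a
    by_cases ha : N ≤ a
    · funext j
      simp only [if_pos ha]
      refine Units.ext ?_
      rw [hχ, hχ, aux_prod_exp, aux_prod_log_exp]
      rw [show (∑ i, (M j i : ℂ) * L' a i) = A (L' a) j from (hAapp _ _).symm]
      rw [show (∑ i, (M j i : ℂ) * Complex.log ((x a i : ℂ))) = A (L a) j from (hAapp _ _).symm]
      rw [hAL' a ha j, hkspec a j]
      simp only [Complex.exp_add, htwoPiI, Complex.exp_int_mul_two_pi_mul_I, mul_one]
    · simp only [if_neg ha]
  · -- limit maps to y
    funext j
    refine Units.ext ?_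
    rw [hχ, aux_prod_exp]
    rw [show (∑ i, (M j i : ℂ) * Llim i) = A Llim j from (hAapp _ _).symm]
    rw [hALlim j, hzlim]
    simp only
    rw [Complex.exp_add, htwoPiI, Complex.exp_int_mul_two_pi_mul_I, mul_one, hclim,
      Complex.exp_log (Units.ne_zero (y j))]
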